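/- Let U ⊆ ℝ^3 be a nonempty open connected set and let F ⊆ ℝ^3 be a finite union of line segments (each segment being the convex hull of two points). Then U \ F is path-connected (and in particular connected). -/

import Mathlib

open Set Metric MeasureTheory

private lemma aux8_span_ne_top {n : ℕ} (hn : n < 3) (p : Fin (n+1) → (Fin 3 → ℝ)) :
    affineSpan ℝ (Set.range p) ≠ ⊤ := by
  intro h
  have h1 : Module.finrank ℝ (vectorSpan ℝ (Set.range p)) ≤ n :=
    finrank_vectorSpan_range_le ℝ p (by simp)
  rw [← direction_affineSpan, h, AffineSubspace.direction_top, finrank_top] at h1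
  have h2 : Module.finrank ℝ (Fin 3 → ℝ) = 3 := by simp
  omega

private lemma aux8_span_null {n : ℕ} (hn : n < 3) (p : Fin (n+1) → (Fin 3 → ℝ)) :
    volume ((affineSpan ℝ (Set.range p) : AffineSubspace ℝ (Fin 3 → ℝ)) : Set (Fin 3 → ℝ)) = 0 :=
  Measure.addHaar_affineSubspace _ _ (aux8_span_ne_top hn p)

private lemma aux8_triple (x a b : Fin 3 → ℝ) :
    ({x, a, b} : Set (Fin 3 → ℝ)) = Set.range ![x, a, b] := by
  ext w; simp [Matrix.range_cons, Matrix.range_empty]; tauto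

private lemma aux8_span3_null (x a b : Fin 3 → ℝ) :
    volume ((affineSpan ℝ ({x, a, b} : Set (Fin 3 → ℝ)) : AffineSubspace ℝ (Fin 3 → ℝ)) :
      Set (Fin 3 → ℝ)) = 0 := by
  rw [aux8_triple]
  exact aux8_span_null (by norm_num) ![x, a, b]

private lemma aux8_seg_null (a b : Fin 3 → ℝ) : volume (segment ℝ a b) = 0 := by
  refine measure_mono_null ?_ (aux8_span_null (n := 1) (by norm_num) ![a, b])
  have h : ({a, b} : Set (Fin 3 → ℝ)) = Set.range ![a, b] := by
    ext w; simp [Matrix.range_cons, Matrix.range_empty]; tauto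
  rw [← h]
  exact (AffineSubspace.convex _).segment_subset
    (subset_affineSpan _ _ (by simp)) (subset_affineSpan _ _ (by simp))

private lemma aux8_F_null (S : Finset ((Fin 3 → ℝ) × (Fin 3 → ℝ))) :
    volume (⋃ p ∈ S, segment ℝ p.1 p.2) = 0 := by
  refine (measure_biUnion_null_iff S.countable_toSet).mpr fun p _ => aux8_seg_null p.1 p.2

private lemma aux8_F_closed (S : Finset ((Fin 3 → ℝ) × (Fin 3 → ℝ))) :
    IsClosed (⋃ p ∈ S, segment ℝ p.1 p.2) := by
  refine S.finite_toSet.isClosed_biUnion fun p _ => ?_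
  rw [segment_eq_image]
  exact (isCompact_Icc.image (by fun_prop)).isClosed

private lemma aux8_diff_nonempty {C F : Set (Fin 3 → ℝ)} (hCo : IsOpen C) (hne : C.Nonempty)
    (hF : volume F = 0) : (C \ F).Nonempty := by
  rw [Set.diff_nonempty]
  intro h
  exact (hCo.measure_pos volume hne).ne' (measure_mono_null h hF)

private lemma aux8_seg_avoid {x z a b : Fin 3 → ℝ} (hx : x ∉ segment ℝ a b)
    (hz : z ∉ (affineSpan ℝ ({x, a, b} : Set (Fin 3 → ℝ)) : Set (Fin 3 → ℝ))) :
    Disjoint (segment ℝ x z) (segment ℝ a b) := by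
  rw [Set.disjoint_left]
  intro w hw hw'
  rw [segment_eq_image] at hw
  obtain ⟨t, ht, rfl⟩ := hw
  set A := affineSpan ℝ ({x, a, b} : Set (Fin 3 → ℝ)) with hA
  have hxA : x ∈ A := subset_affineSpan _ _ (by simp)
  have haA : a ∈ A := subset_affineSpan _ _ (by simp)
  have hbA : b ∈ A := subset_affineSpan _ _ (by simp)
  have hwA : (1 - t) • x + t • z ∈ A := (AffineSubspace.convex A).segment_subset haA hbA hw'
  rcases eq_or_ne t 0 with rfl | ht0
  · simp only [sub_zero, one_smul, zero_smul, add_zero] at hw'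
    exact hx hw'
  · apply hz
    have hd : ((1 - t) • x + t • z) - x ∈ A.direction := by
      have := AffineSubspace.vsub_mem_direction hwA hxA
      simpa using this
    have hd2 : t⁻¹ • (((1 - t) • x + t • z) - x) ∈ A.direction := A.direction.smul_mem _ hd
    have hz' : t⁻¹ • (((1 - t) • x + t • z) - x) +ᵥ x ∈ A :=
      AffineSubspace.vadd_mem_of_mem_direction hd2 hxA
    have key : t⁻¹ • (((1 - t) • x + t • z) - x) +ᵥ x = z := by
      rw [vadd_eq_add]; match_scalars <;> field_simp <;> ring
    rwa [key] at hz'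

private lemma aux8_convex_case {C : Set (Fin 3 → ℝ)} (hC : Convex ℝ C) (hCo : IsOpen C)
    (hne : C.Nonempty) (S : Finset ((Fin 3 → ℝ) × (Fin 3 → ℝ))) :
    IsPathConnected (C \ ⋃ p ∈ S, segment ℝ p.1 p.2) := by
  set F := ⋃ p ∈ S, segment ℝ p.1 p.2 with hFdef
  have hF0 : volume F = 0 := aux8_F_null S
  rw [isPathConnected_iff]
  refine ⟨aux8_diff_nonempty hCo hne hF0, ?_⟩
  intro x hx y hy
  set B : Set (Fin 3 → ℝ) := F ∪ ⋃ p ∈ S,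
      ((affineSpan ℝ ({x, p.1, p.2} : Set (Fin 3 → ℝ)) : Set (Fin 3 → ℝ)) ∪
       (affineSpan ℝ ({y, p.1, p.2} : Set (Fin 3 → ℝ)) : Set (Fin 3 → ℝ))) with hBdef
  have hB0 : volume B = 0 := by
    refine measure_union_null hF0 ?_
    refine (measure_biUnion_null_iff S.countable_toSet).mpr fun p _ => ?_
    exact measure_union_null (aux8_span3_null x p.1 p.2) (aux8_span3_null y p.1 p.2)
  obtain ⟨z, hzC, hzB⟩ := aux8_diff_nonempty hCo hne hB0
  have hznot : ∀ p ∈ S, z ∉ (affineSpan ℝ ({x, p.1, p.2} : Set (Fin 3 → ℝ)) : Set (Fin 3 → ℝ)) ∧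
      z ∉ (affineSpan ℝ ({y, p.1, p.2} : Set (Fin 3 → ℝ)) : Set (Fin 3 → ℝ)) := by
    intro p hp
    exact ⟨fun h => hzB (Or.inr (Set.mem_biUnion hp (Or.inl h))),
           fun h => hzB (Or.inr (Set.mem_biUnion hp (Or.inr h)))⟩
  have hnotseg : ∀ w : Fin 3 → ℝ, w ∉ F → ∀ p ∈ S, w ∉ segment ℝ p.1 p.2 := by
    intro w hw p hp hmem
    exact hw (Set.mem_biUnion hp hmem)
  have hxz : segment ℝ x z ⊆ C \ F := by
    intro w hw
    refine ⟨hC.segment_subset hx.1 hzC hw, ?_⟩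
    intro hwF
    rw [hFdef, Set.mem_iUnion₂] at hwF
    obtain ⟨p, hp, hwp⟩ := hwF
    exact Set.disjoint_left.mp
      (aux8_seg_avoid (hnotseg x hx.2 p hp) ((hznot p hp).1)) hw hwp
  have hzy : segment ℝ y z ⊆ C \ F := by
    intro w hw
    refine ⟨hC.segment_subset hy.1 hzC hw, ?_⟩
    intro hwF
    rw [hFdef, Set.mem_iUnion₂] at hwF
    obtain ⟨p, hp, hwp⟩ := hwF
    exact Set.disjoint_left.mp
      (aux8_seg_avoid (hnotseg y hy.2 p hp) ((hznot p hp).2)) hw hwp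
  exact (JoinedIn.of_segment_subset hxz).trans (JoinedIn.of_segment_subset (by
    rwa [segment_symm] at hzy))

theorem stmt8 (U : Set (Fin 3 → ℝ)) (hU : IsOpen U) (hUconn : IsConnected U)
    (S : Finset ((Fin 3 → ℝ) × (Fin 3 → ℝ))) :
    IsPathConnected (U \ ⋃ p ∈ S, segment ℝ p.1 p.2) ∧
    IsConnected (U \ ⋃ p ∈ S, segment ℝ p.1 p.2) := by
  set F := ⋃ p ∈ S, segment ℝ p.1 p.2 with hFdef
  have hF0 : volume F = 0 := aux8_F_null S
  have hso : IsOpen (U \ F) := hU.sdiff (aux8_F_closed S)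
  have hne : (U \ F).Nonempty := aux8_diff_nonempty hU hUconn.nonempty hF0
  have hpre : IsPreconnected (U \ F) := by
    intro u v hu hv hsuv hsu hsv
    by_contra hcon
    rw [Set.not_nonempty_iff_eq_empty] at hcon
    set Ut : Set (Fin 3 → ℝ) := {x | ∃ r > 0, ball x r ⊆ U ∧ ball x r \ F ⊆ u} with hUtdef
    set Vt : Set (Fin 3 → ℝ) := {x | ∃ r > 0, ball x r ⊆ U ∧ ball x r \ F ⊆ v} with hVtdef
    have hopen : ∀ (W : Set (Fin 3 → ℝ)),
        IsOpen {x | ∃ r > 0, ball x r ⊆ U ∧ ball x r \ F ⊆ W} := by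
      intro W
      rw [Metric.isOpen_iff]
      rintro x ⟨r, hr, hrU, hrW⟩
      refine ⟨r / 2, by positivity, fun y hy => ?_⟩
      have hsub : ball y (r / 2) ⊆ ball x r :=
        ball_subset_ball' (by have := mem_ball.mp hy; linarith)
      exact ⟨r / 2, by positivity, hsub.trans hrU,
        (Set.diff_subset_diff_left hsub).trans hrW⟩
    have cover : U ⊆ Ut ∪ Vt := by
      intro x hxU
      obtain ⟨r, hr, hrU⟩ := Metric.isOpen_iff.mp hU x hxU
      have hpc : IsPathConnected (ball x r \ F) :=
        aux8_convex_case (convex_ball x r) isOpen_ball (nonempty_ball.mpr hr) S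
      have hprec := hpc.isConnected.isPreconnected
      have hsub : ball x r \ F ⊆ u ∪ v := (Set.diff_subset_diff_left hrU).trans hsuv
      by_cases hcu : ((ball x r \ F) ∩ u).Nonempty
      · by_cases hcv : ((ball x r \ F) ∩ v).Nonempty
        · exfalso
          obtain ⟨w, hw⟩ := hprec u v hu hv hsub hcu hcv
          have hmem : w ∈ (U \ F) ∩ (u ∩ v) := ⟨⟨hrU hw.1.1, hw.1.2⟩, hw.2⟩
          rw [hcon] at hmem
          exact hmem
        · left
          refine ⟨r, hr, hrU, fun w hw => ?_⟩
          rcases hsub hw with h | h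
          · exact h
          · exact absurd ⟨w, hw, h⟩ hcv
      · right
        refine ⟨r, hr, hrU, fun w hw => ?_⟩
        rcases hsub hw with h | h
        · exact absurd ⟨w, hw, h⟩ hcu
        · exact h
    have hUtne : (U ∩ Ut).Nonempty := by
      obtain ⟨a, ⟨haU, haF⟩, hau⟩ := hsu
      obtain ⟨r, hr, hsub⟩ := Metric.isOpen_iff.mp (hso.inter hu) a ⟨⟨haU, haF⟩, hau⟩
      exact ⟨a, haU, r, hr, fun w hw => (hsub hw).1.1, fun w hw => (hsub hw.1).2⟩
    have hVtne : (U ∩ Vt).Nonempty := by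
      obtain ⟨a, ⟨haU, haF⟩, hav⟩ := hsv
      obtain ⟨r, hr, hsub⟩ := Metric.isOpen_iff.mp (hso.inter hv) a ⟨⟨haU, haF⟩, hav⟩
      exact ⟨a, haU, r, hr, fun w hw => (hsub hw).1.1, fun w hw => (hsub hw.1).2⟩
    obtain ⟨w, hwU, ⟨r₁, hr₁, h1U, h1u⟩, ⟨r₂, hr₂, h2U, h2v⟩⟩ :=
      hUconn.isPreconnected Ut Vt (hopen u) (hopen v) cover hUtne hVtne
    have hrpos : (0 : ℝ) < min r₁ r₂ := lt_min hr₁ hr₂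
    obtain ⟨q, hq, hqF⟩ :=
      aux8_diff_nonempty (isOpen_ball (x := w) (ε := min r₁ r₂)) (nonempty_ball.mpr hrpos) hF0
    have hq1 : q ∈ ball w r₁ := ball_subset_ball (min_le_left _ _) hq
    have hq2 : q ∈ ball w r₂ := ball_subset_ball (min_le_right _ _) hq
    have hmem : q ∈ (U \ F) ∩ (u ∩ v) :=
      ⟨⟨h1U hq1, hqF⟩, h1u ⟨hq1, hqF⟩, h2v ⟨hq2, hqF⟩⟩
    rw [hcon] at hmem
    exact hmem
  have hconn : IsConnected (U \ F) := ⟨hne, hpre⟩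
  exact ⟨hso.isConnected_iff_isPathConnected.mp hconn, hconn⟩
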